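/- Let q = 2, let H be uniform over F_2^{(n-k)×n}, let s be uniform over F_2^{n-k}, and let e^Ber ∈ F_2^n have independent coordinates each Bernoulli with parameter τ. Then the expectation over H of the statistical distance between e^Ber·Hᵀ and s is at most (1/2)·√(2^{-k}·(1 + (1−2τ)²)^n). -/

import Mathlib

open Finset Matrix

section aux
variable {n : ℕ} {τ : ℝ}

lemma zmod2_sum (f : ZMod 2 → ℝ) : ∑ a : ZMod 2, f a = f 0 + f 1 := by
  rw [show (univ : Finset (ZMod 2)) = {0, 1} by decide]; simp

lemma hn_card (e : Fin n → ZMod 2) : hammingNorm e = #(univ.filter fun i => e i ≠ 0) := rfl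

lemma hn_le (e : Fin n → ZMod 2) : hammingNorm e ≤ n := by
  rw [hn_card]; simpa using Finset.card_filter_le univ (fun i => e i ≠ 0)

/-- product form of the Bernoulli weight -/
lemma weight_prod (e : Fin n → ZMod 2) :
    τ ^ hammingNorm e * (1 - τ) ^ (n - hammingNorm e) =
      ∏ i, (if e i ≠ 0 then τ else 1 - τ) := by
  rw [Finset.prod_ite, Finset.prod_const, Finset.prod_const]
  have := Finset.card_filter_add_card_filter_not (s := (univ : Finset (Fin n)))
    (p := fun i => e i ≠ 0)
  simp only [Finset.card_univ, Fintype.card_fin] at this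
  rw [← hn_card] at this
  congr 2
  omega

lemma sum_weight : ∑ e : Fin n → ZMod 2, τ ^ hammingNorm e * (1 - τ) ^ (n - hammingNorm e) = 1 := by
  simp_rw [weight_prod]
  have h := Finset.prod_univ_sum (fun _ : Fin n => (univ : Finset (ZMod 2)))
    (fun _ a => if a ≠ 0 then τ else 1 - τ)
  rw [Fintype.piFinset_univ] at h
  rw [← h]
  have h1 : ∀ i : Fin n, (∑ a : ZMod 2, if a ≠ 0 then τ else 1 - τ) = 1 := by
    intro _; rw [zmod2_sum]; norm_num
  rw [Finset.prod_congr rfl (fun i _ => h1 i), Finset.prod_const_one]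

lemma sum_weight_sq :
    ∑ e : Fin n → ZMod 2, (τ ^ hammingNorm e * (1 - τ) ^ (n - hammingNorm e)) ^ 2
      = (τ ^ 2 + (1 - τ) ^ 2) ^ n := by
  simp_rw [weight_prod, ← Finset.prod_pow]
  have h := Finset.prod_univ_sum (fun _ : Fin n => (univ : Finset (ZMod 2)))
    (fun _ a => (if a ≠ 0 then τ else 1 - τ) ^ 2)
  rw [Fintype.piFinset_univ] at h
  rw [← h]
  have h1 : ∀ i : Fin n, (∑ a : ZMod 2, (if a ≠ 0 then τ else 1 - τ) ^ 2) = τ ^ 2 + (1 - τ) ^ 2 := by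
    intro _; rw [zmod2_sum]; norm_num [add_comm]
  rw [Finset.prod_congr rfl (fun i _ => h1 i), Finset.prod_const, Finset.card_univ,
    Fintype.card_fin]

end aux

section cnt
variable {n m : ℕ}

lemma dv_update (x h : Fin n → ZMod 2) (i0 : Fin n) (v : ZMod 2) :
    (Function.update h i0 v) ⬝ᵥ x = v * x i0 + ∑ i ∈ univ \ {i0}, h i * x i := by
  have : (fun i => Function.update h i0 v i * x i)
      = Function.update (fun i => h i * x i) i0 (v * x i0) := by
    funext i
    by_cases hi : i = i0 <;> simp [Function.update, hi]
  show ∑ i, Function.update h i0 v i * x i = _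
  rw [show ∑ i, Function.update h i0 v i * x i
      = ∑ i, Function.update (fun i => h i * x i) i0 (v * x i0) i from by rw [this]]
  exact Finset.sum_update_of_mem (Finset.mem_univ i0) _ _

lemma dv_split (x h : Fin n → ZMod 2) (i0 : Fin n) :
    h ⬝ᵥ x = h i0 * x i0 + ∑ i ∈ univ \ {i0}, h i * x i := by
  have := dv_update x h i0 (h i0)
  rwa [Function.update_eq_self] at this

lemma row_count {x : Fin n → ZMod 2} (hx : x ≠ 0) :
    ∑ h : Fin n → ZMod 2, (if h ⬝ᵥ x = 0 then (1:ℝ) else 0) = 2 ^ n / 2 := by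
  obtain ⟨i0, hi0⟩ : ∃ i, x i ≠ 0 := by
    by_contra hc
    push_neg at hc
    exact hx (funext fun i => hc i)
  have hx1 : x i0 = 1 := by
    have h2 : ∀ a : ZMod 2, a ≠ 0 → a = 1 := by decide
    exact h2 _ hi0
  set σ : (Fin n → ZMod 2) → (Fin n → ZMod 2) := fun h => Function.update h i0 (h i0 + 1) with hσ
  have hflip : ∀ h, σ h ⬝ᵥ x = h ⬝ᵥ x + 1 := by
    intro h
    rw [hσ, dv_update, dv_split x h i0, hx1]
    ring
  have hinv : ∀ h, σ (σ h) = h := by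
    intro h
    funext i
    by_cases hi : i = i0 <;> simp [hσ, Function.update, hi]
    subst hi
    generalize h i = a; revert a; decide
  have hcard : #(univ.filter fun h : Fin n → ZMod 2 => h ⬝ᵥ x = 0)
      = #(univ.filter fun h : Fin n → ZMod 2 => ¬ h ⬝ᵥ x = 0) := by
    apply Finset.card_bij' (fun h _ => σ h) (fun h _ => σ h)
    · intro h hh
      simp only [Finset.mem_filter, Finset.mem_univ, true_and] at hh ⊢
      rw [hflip, hh]
      decide
    · intro h hh
      simp only [Finset.mem_filter, Finset.mem_univ, true_and] at hh ⊢
      rw [hflip]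
      revert hh; generalize h ⬝ᵥ x = a; revert a; decide
    · intro h _; exact hinv h
    · intro h _; exact hinv h
  have htot := Finset.card_filter_add_card_filter_not
    (s := (univ : Finset (Fin n → ZMod 2))) (p := fun h => h ⬝ᵥ x = 0)
  rw [Finset.card_univ] at htot
  have hcardG : Fintype.card (Fin n → ZMod 2) = 2 ^ n := by
    simp [ZMod.card]
  rw [Finset.sum_boole]
  rw [hcardG] at htot
  rw [← hcard] at htot
  have : #(univ.filter fun h : Fin n → ZMod 2 => h ⬝ᵥ x = 0) * 2 = 2 ^ n := by omega
  field_simp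
  exact_mod_cast this

lemma mat_count {x : Fin n → ZMod 2} (hx : x ≠ 0) :
    ∑ H : Matrix (Fin m) (Fin n) (ZMod 2), (if H.mulVec x = 0 then (1:ℝ) else 0)
      = (2 ^ n / 2) ^ m := by
  have key : ∀ H : Matrix (Fin m) (Fin n) (ZMod 2),
      (if H.mulVec x = 0 then (1:ℝ) else 0) = ∏ j, (if H j ⬝ᵥ x = 0 then (1:ℝ) else 0) := by
    intro H
    rw [Finset.prod_boole]
    congr 1
    simp only [funext_iff, eq_iff_iff]
    constructor
    · intro hh j _; exact hh j
    · intro hh j; exact hh j (Finset.mem_univ j)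
  simp_rw [key]
  have h := Finset.prod_univ_sum (fun _ : Fin m => (univ : Finset (Fin n → ZMod 2)))
    (fun _ h => if h ⬝ᵥ x = 0 then (1:ℝ) else 0)
  rw [Fintype.piFinset_univ] at h
  have : ∑ H : Matrix (Fin m) (Fin n) (ZMod 2), ∏ j, (if H j ⬝ᵥ x = 0 then (1:ℝ) else 0)
      = ∑ H : Fin m → Fin n → ZMod 2, ∏ j, (if H j ⬝ᵥ x = 0 then (1:ℝ) else 0) := rfl
  rw [this, ← h, Finset.prod_congr rfl (fun j _ => row_count hx), Finset.prod_const,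
    Finset.card_univ, Fintype.card_fin]

end cnt

section main
variable {n m : ℕ} {τ : ℝ}

-- abbreviations
private noncomputable def P (n : ℕ) (τ : ℝ) (e : Fin n → ZMod 2) : ℝ :=
  τ ^ hammingNorm e * (1 - τ) ^ (n - hammingNorm e)

private noncomputable def F (n m : ℕ) (τ : ℝ) (H : Matrix (Fin m) (Fin n) (ZMod 2))
    (v : Fin m → ZMod 2) : ℝ :=
  ∑ e ∈ univ.filter (fun e : Fin n → ZMod 2 => H.mulVec e = v), P n τ e

lemma sum_weight' : ∑ e : Fin n → ZMod 2, P n τ e = 1 := sum_weight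

lemma sum_weight_sq' : ∑ e : Fin n → ZMod 2, (P n τ e)^2 = (τ^2 + (1-τ)^2)^n := by
  unfold P
  exact sum_weight_sq

lemma mat_count' {x : Fin n → ZMod 2} (hx : x ≠ 0) :
    ∑ H : Matrix (Fin m) (Fin n) (ZMod 2), (if H.mulVec x = 0 then (1:ℝ) else 0)
      = ((2:ℝ) ^ n / 2) ^ m := mat_count hx

lemma sum_F (H : Matrix (Fin m) (Fin n) (ZMod 2)) : ∑ v, F n m τ H v = 1 := by
  rw [show ∑ v, F n m τ H v = ∑ e : Fin n → ZMod 2, P n τ e from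
    Finset.sum_fiberwise univ (fun e => H.mulVec e) (P n τ), sum_weight']

lemma sum_F_sq (H : Matrix (Fin m) (Fin n) (ZMod 2)) :
    ∑ v, (F n m τ H v)^2
      = ∑ e : Fin n → ZMod 2, ∑ e' : Fin n → ZMod 2,
          P n τ e * P n τ e' * (if H.mulVec e = H.mulVec e' then (1:ℝ) else 0) := by
  have step1 : ∀ v, (F n m τ H v)^2 = ∑ e : Fin n → ZMod 2, ∑ e' : Fin n → ZMod 2,
      (if H.mulVec e = v then P n τ e else 0) * (if H.mulVec e' = v then P n τ e' else 0) := by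
    intro v
    rw [sq]
    unfold F
    rw [Finset.sum_filter, Finset.sum_mul_sum]
  simp_rw [step1]
  rw [Finset.sum_comm]
  congr 1; funext e
  rw [Finset.sum_comm]
  congr 1; funext e'
  simp_rw [ite_mul, zero_mul, mul_ite, mul_zero]
  rw [Finset.sum_ite_eq]
  simp only [Finset.mem_univ, if_true]
  by_cases h : H.mulVec e = H.mulVec e'
  · rw [h]; simp
  · rw [if_neg (fun hc => h hc.symm), if_neg h]

lemma sum_H_T (e e' : Fin n → ZMod 2) :
    ∑ H : Matrix (Fin m) (Fin n) (ZMod 2), (if H.mulVec e = H.mulVec e' then (1:ℝ) else 0)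
      = if e = e' then (Fintype.card (Matrix (Fin m) (Fin n) (ZMod 2)) : ℝ)
        else ((2:ℝ) ^ n / 2) ^ m := by
  by_cases h : e = e'
  · subst h
    simp [Finset.card_univ]
  · rw [if_neg h]
    rw [← mat_count' (x := e - e') (sub_ne_zero.mpr h)]
    congr 1; funext H
    simp only [Matrix.mulVec_sub, sub_eq_zero]


lemma sum_H_F_sq :
    ∑ H : Matrix (Fin m) (Fin n) (ZMod 2), ∑ v, (F n m τ H v)^2
      = ((2:ℝ)^n/2)^m
        + ((Fintype.card (Matrix (Fin m) (Fin n) (ZMod 2)) : ℝ) - ((2:ℝ)^n/2)^m)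
          * (τ^2+(1-τ)^2)^n := by
  set N : ℝ := (Fintype.card (Matrix (Fin m) (Fin n) (ZMod 2)) : ℝ) with hN
  set N' : ℝ := ((2:ℝ)^n/2)^m with hN'
  simp_rw [sum_F_sq]
  rw [Finset.sum_comm]
  rw [Finset.sum_congr rfl (fun e _ => Finset.sum_comm)]
  simp_rw [← Finset.mul_sum, sum_H_T]
  have hsplit : ∀ (e e' : Fin n → ZMod 2),
      P n τ e * P n τ e' * (if e = e' then N else N')
        = P n τ e * (P n τ e' * N') + (if e = e' then P n τ e * P n τ e' * (N - N') else 0) := by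
    intro e e'
    by_cases h : e = e' <;> simp [h] <;> ring
  simp_rw [← hN, ← hN', hsplit, Finset.sum_add_distrib]
  congr 1
  · have inner : (∑ e' : Fin n → ZMod 2, P n τ e' * N') = N' := by
      rw [← Finset.sum_mul, sum_weight']
      try rw [one_mul]
    simp_rw [← Finset.mul_sum, inner]
  · simp_rw [Finset.sum_ite_eq, Finset.mem_univ, if_true]
    have : ∀ e : Fin n → ZMod 2, P n τ e * P n τ e * (N - N') = (P n τ e)^2 * (N - N') := by
      intro e; ring
    simp_rw [this]
    rw [← Finset.sum_mul, sum_weight_sq']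
    try ring

lemma card_eq : (Fintype.card (Matrix (Fin m) (Fin n) (ZMod 2)) : ℝ) = ((2:ℝ)^n/2)^m * 2^m := by
  rw [show Fintype.card (Matrix (Fin m) (Fin n) (ZMod 2))
    = Fintype.card (Fin m → Fin n → ZMod 2) from rfl]
  simp only [Fintype.card_pi, Fintype.card_fun, ZMod.card, Fintype.card_fin,
    Finset.prod_const, Finset.card_univ]
  push_cast
  rw [div_pow]
  field_simp

lemma sum_Q_le :
    ∑ H : Matrix (Fin m) (Fin n) (ZMod 2), ∑ v, (F n m τ H v - 1/2^m)^2
      ≤ (Fintype.card (Matrix (Fin m) (Fin n) (ZMod 2)) : ℝ) * (τ^2+(1-τ)^2)^n := by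
  set N : ℝ := (Fintype.card (Matrix (Fin m) (Fin n) (ZMod 2)) : ℝ) with hN
  set N' : ℝ := ((2:ℝ)^n/2)^m with hN'
  set b : ℝ := τ^2 + (1-τ)^2 with hb
  have hperH : ∀ H : Matrix (Fin m) (Fin n) (ZMod 2),
      ∑ v, (F n m τ H v - 1/2^m)^2
        = ∑ v, (F n m τ H v)^2 - 2 * (1/2^m) + 2^m * (1/2^m)^2 := by
    intro H
    have expand : ∀ v : Fin m → ZMod 2, (F n m τ H v - 1/2^m)^2
        = (F n m τ H v)^2 - 2 * (1/2^m) * F n m τ H v + (1/2^m)^2 := by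
      intro v; ring
    simp_rw [expand, Finset.sum_add_distrib, Finset.sum_sub_distrib, ← Finset.mul_sum, sum_F,
      Finset.sum_const, Finset.card_univ]
    have : Fintype.card (Fin m → ZMod 2) = 2^m := by simp [ZMod.card]
    rw [this]
    push_cast
    ring
  have hNN' : N = N' * 2^m := card_eq
  simp_rw [hperH, Finset.sum_add_distrib, Finset.sum_sub_distrib, sum_H_F_sq,
    Finset.sum_const, Finset.card_univ, nsmul_eq_mul]
  rw [card_eq]
  have h2m : (0:ℝ) < 2^m := by positivity
  have hC : (0:ℝ) ≤ ((2:ℝ)^n/2)^m := by positivity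
  have hbn : (0:ℝ) ≤ (τ^2+(1-τ)^2)^n := by positivity
  have key : ((2:ℝ)^n/2)^m + (((2:ℝ)^n/2)^m * 2^m - ((2:ℝ)^n/2)^m) * (τ^2+(1-τ)^2)^n
      - ((2:ℝ)^n/2)^m * 2^m * (2 * (1/2^m)) + ((2:ℝ)^n/2)^m * 2^m * (2^m * (1/2^m)^2)
      = ((2:ℝ)^n/2)^m * 2^m * (τ^2+(1-τ)^2)^n - ((2:ℝ)^n/2)^m * (τ^2+(1-τ)^2)^n := by
    field_simp
    ring
  rw [key, hN, card_eq, hb]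
  nlinarith [mul_nonneg hC hbn]
lemma cs_abs (H : Matrix (Fin m) (Fin n) (ZMod 2)) :
    ∑ v : Fin m → ZMod 2, |F n m τ H v - 1/2^m|
      ≤ Real.sqrt ((2:ℝ)^m * ∑ v : Fin m → ZMod 2, (F n m τ H v - 1/2^m)^2) := by
  set g : (Fin m → ZMod 2) → ℝ := fun v => F n m τ H v - 1/2^m with hg
  have h1 := Finset.sum_mul_sq_le_sq_mul_sq univ (fun _ => (1:ℝ)) (fun v => |g v|)
  simp only [one_mul, one_pow, sq_abs, Finset.sum_const, Finset.card_univ, nsmul_eq_mul,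
    mul_one] at h1
  have hcard : (Fintype.card (Fin m → ZMod 2) : ℝ) = 2^m := by
    simp [ZMod.card]
  rw [hcard] at h1
  have h2 : ∑ v, |g v| = Real.sqrt ((∑ v, |g v|)^2) :=
    (Real.sqrt_sq (Finset.sum_nonneg fun v _ => abs_nonneg _)).symm
  rw [h2]
  exact Real.sqrt_le_sqrt h1

lemma cs_H (a : Matrix (Fin m) (Fin n) (ZMod 2) → ℝ) (ha : ∀ H, 0 ≤ a H) :
    ∑ H, Real.sqrt (a H)
      ≤ Real.sqrt ((Fintype.card (Matrix (Fin m) (Fin n) (ZMod 2)) : ℝ) * ∑ H, a H) := by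
  have h1 := Finset.sum_mul_sq_le_sq_mul_sq univ (fun _ : Matrix (Fin m) (Fin n) (ZMod 2) => (1:ℝ))
    (fun H => Real.sqrt (a H))
  simp only [one_mul, one_pow, Finset.sum_const, Finset.card_univ, nsmul_eq_mul, mul_one] at h1
  have h2 : ∀ H : Matrix (Fin m) (Fin n) (ZMod 2), Real.sqrt (a H)^2 = a H := fun H =>
    Real.sq_sqrt (ha H)
  simp_rw [h2] at h1
  have h3 : ∑ H, Real.sqrt (a H) = Real.sqrt ((∑ H, Real.sqrt (a H))^2) :=
    (Real.sqrt_sq (Finset.sum_nonneg fun H _ => Real.sqrt_nonneg _)).symm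
  rw [h3]
  exact Real.sqrt_le_sqrt h1

end main

open scoped BigOperators

theorem stmt_18 (n k : ℕ) (hkn : k ≤ n) (τ : ℝ) (hτ0 : 0 ≤ τ) (hτ1 : τ ≤ 1) :
    (∑ H : Matrix (Fin (n - k)) (Fin n) (ZMod 2), (1 / 2) * ∑ v : Fin (n - k) → ZMod 2,
        |(∑ e ∈ univ.filter (fun e : Fin n → ZMod 2 => H.mulVec e = v),
            τ ^ hammingNorm e * (1 - τ) ^ (n - hammingNorm e))
          - 1 / (2 : ℝ) ^ (n - k)|)
      / (Fintype.card (Matrix (Fin (n - k)) (Fin n) (ZMod 2)) : ℝ)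
    ≤ (1 / 2) * Real.sqrt ((1 + (1 - 2 * τ) ^ 2) ^ n / (2 : ℝ) ^ k) := by
  set m := n - k with hm
  have hFdef : ∀ (H : Matrix (Fin m) (Fin n) (ZMod 2)) (v : Fin m → ZMod 2),
      (∑ e ∈ univ.filter (fun e : Fin n → ZMod 2 => H.mulVec e = v),
        τ ^ hammingNorm e * (1 - τ) ^ (n - hammingNorm e)) = F n m τ H v := fun _ _ => rfl
  simp only [hFdef]
  set N : ℝ := (Fintype.card (Matrix (Fin m) (Fin n) (ZMod 2)) : ℝ) with hN
  have hN0 : (0:ℝ) < N := by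
    rw [hN]; exact_mod_cast Fintype.card_pos
  set b : ℝ := τ^2 + (1-τ)^2 with hb
  have hbn : (0:ℝ) ≤ b^n := by positivity
  have h2m : (0:ℝ) < (2:ℝ)^m := by positivity
  -- numerator bound
  have hnum : ∑ H : Matrix (Fin m) (Fin n) (ZMod 2),
      (1/2 : ℝ) * ∑ v : Fin m → ZMod 2, |F n m τ H v - 1/2^m|
      ≤ (1/2) * (N * Real.sqrt ((2:ℝ)^m * b^n)) := by
    rw [← Finset.mul_sum]
    apply mul_le_mul_of_nonneg_left _ (by norm_num : (0:ℝ) ≤ 1/2)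
    calc ∑ H : Matrix (Fin m) (Fin n) (ZMod 2), ∑ v : Fin m → ZMod 2, |F n m τ H v - 1/2^m|
        ≤ ∑ H : Matrix (Fin m) (Fin n) (ZMod 2),
            Real.sqrt ((2:ℝ)^m * ∑ v : Fin m → ZMod 2, (F n m τ H v - 1/2^m)^2) :=
          Finset.sum_le_sum fun H _ => cs_abs H
      _ ≤ Real.sqrt (N * ∑ H : Matrix (Fin m) (Fin n) (ZMod 2),
            (2:ℝ)^m * ∑ v : Fin m → ZMod 2, (F n m τ H v - 1/2^m)^2) := by
          apply cs_H
          intro H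
          have : (0:ℝ) ≤ ∑ v : Fin m → ZMod 2, (F n m τ H v - 1/2^m)^2 :=
            Finset.sum_nonneg fun v _ => sq_nonneg _
          positivity
      _ ≤ Real.sqrt (N * ((2:ℝ)^m * (N * b^n))) := by
          apply Real.sqrt_le_sqrt
          apply mul_le_mul_of_nonneg_left _ hN0.le
          rw [← Finset.mul_sum]
          exact mul_le_mul_of_nonneg_left sum_Q_le h2m.le
      _ = N * Real.sqrt ((2:ℝ)^m * b^n) := by
          rw [show N * ((2:ℝ)^m * (N * b^n)) = N^2 * ((2:ℝ)^m * b^n) by ring,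
            Real.sqrt_mul (sq_nonneg N), Real.sqrt_sq hN0.le]
  -- divide by N
  have hdiv : (∑ H : Matrix (Fin m) (Fin n) (ZMod 2),
      (1/2 : ℝ) * ∑ v : Fin m → ZMod 2, |F n m τ H v - 1/2^m|) / N
      ≤ (1/2) * Real.sqrt ((2:ℝ)^m * b^n) := by
    rw [div_le_iff₀ hN0]
    calc _ ≤ (1/2) * (N * Real.sqrt ((2:ℝ)^m * b^n)) := hnum
      _ = 1/2 * Real.sqrt (2^m * b^n) * N := by ring
  -- identify the sqrt argument
  have hid : (2:ℝ)^m * b^n = (1 + (1 - 2*τ)^2)^n / (2:ℝ)^k := by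
    have hbb : b = (1 + (1 - 2*τ)^2)/2 := by rw [hb]; ring
    have hmk : m + k = n := by omega
    rw [hbb, div_pow, eq_div_iff (by positivity : ((2:ℝ)^k) ≠ 0)]
    have h2 : (2:ℝ)^m * 2^k = 2^n := by rw [← pow_add, hmk]
    field_simp
    rw [← h2]
  rw [← hid]
  exact hdiv
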